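/- Let μ be a finite nonnegative Borel measure on ℝ^n with heat extension u(x,t) = ∫ (4πt)^{-n/2} exp(-‖x−ξ‖²/(4t)) dμ(ξ). If the strong derivative of μ at x₀ equals L (i.e., μ(x₀ + rB)/m(rB) → L as r → 0 for every open ball B), then u has parabolic limit L at x₀: for each α > 0, u(x,t) → L as (x,t) → (x₀,0) with ‖x−x₀‖² < α t. -/

import Mathlib

open Pointwise MeasureTheory Filter

/-- The Gauss–Weierstrass (heat) kernel on ℝⁿ. -/
noncomputable def W (n : ℕ) (x : EuclideanSpace ℝ (Fin n)) (t : ℝ) : ℝ :=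
  (4 * Real.pi * t) ^ (-(n : ℝ) / 2) * Real.exp (-‖x‖ ^ 2 / (4 * t))

open Metric Set Real
open scoped ENNReal

variable {n : ℕ}

lemma aux_image_ball (x₀ y : EuclideanSpace ℝ (Fin n)) {r s : ℝ} (hr : 0 < r) :
    (fun z => x₀ + r • z) '' Metric.ball y s = Metric.ball (x₀ + r • y) (r * s) := by
  ext u
  simp only [Set.mem_image, Metric.mem_ball]
  constructor
  · rintro ⟨z, hz, rfl⟩
    have : dist (x₀ + r • z) (x₀ + r • y) = r * dist z y := by
      simp [dist_eq_norm, ← smul_sub, norm_smul, abs_of_pos hr]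
    rw [this]
    exact (mul_lt_mul_iff_right₀ hr).2 hz
  · intro hu
    refine ⟨r⁻¹ • (u - x₀), ?_, by simp [smul_smul, mul_inv_cancel₀ hr.ne']⟩
    have hy : y = r⁻¹ • (r • y) := by rw [smul_smul, inv_mul_cancel₀ hr.ne', one_smul]
    rw [hy, dist_smul₀, Real.norm_eq_abs, abs_of_pos (inv_pos.2 hr)]
    have : dist (u - x₀) (r • y) = dist u (x₀ + r • y) := by
      rw [dist_eq_norm, dist_eq_norm]
      congr 1
      abel
    rw [this]
    calc r⁻¹ * dist u (x₀ + r • y) < r⁻¹ * (r * s) := (mul_lt_mul_iff_right₀ (inv_pos.2 hr)).2 hu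
      _ = s := by field_simp


lemma aux_ftc (b : ℝ) :
    ∫ s in Set.Ioi b, s / 2 * Real.exp (-s ^ 2 / 4) = Real.exp (-b ^ 2 / 4) := by
  have h := MeasureTheory.integral_Ioi_of_hasDerivAt_of_tendsto'
    (f := fun s : ℝ => -Real.exp (-s ^ 2 / 4)) (f' := fun s => s / 2 * Real.exp (-s ^ 2 / 4))
    (a := b) (m := 0) ?_ ?_ ?_
  · rw [h]; ring_nf
  · intro x _
    have : HasDerivAt (fun s : ℝ => -s ^ 2 / 4) (-(2 * x) / 4) x := by
      simpa using ((hasDerivAt_pow 2 x).neg.div_const 4)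
    have := (this.exp).neg
    convert this using 1
    · rfl
    ring
  · have h1 : Integrable (fun s : ℝ => s * Real.exp (-(1/4) * s ^ 2)) :=
      integrable_mul_exp_neg_mul_sq (by norm_num)
    refine ((h1.div_const 2).integrableOn (s := Set.Ioi b)).congr_fun (fun x _ => ?_)
      measurableSet_Ioi
    ring_nf
  · rw [← neg_zero]
    apply Tendsto.neg
    apply Real.tendsto_exp_atBot.comp
    apply Tendsto.atBot_div_const (by norm_num)
    have : Tendsto (fun s : ℝ => s ^ 2) atTop atTop := tendsto_pow_atTop (by norm_num)
    exact (tendsto_neg_atBot_iff.2 this)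


lemma aux_tonelli (ν : Measure (EuclideanSpace ℝ (Fin n))) [SFinite ν]
    (x : EuclideanSpace ℝ (Fin n)) {t : ℝ} (ht : 0 < t) :
    ∫⁻ ξ, ENNReal.ofReal (Real.exp (-‖x - ξ‖ ^ 2 / (4 * t))) ∂ν
      = ∫⁻ s in Set.Ioi (0:ℝ), ENNReal.ofReal (s / 2 * Real.exp (-s ^ 2 / 4))
          * ν (Metric.ball x (Real.sqrt t * s)) := by
  have hst : 0 < Real.sqrt t := Real.sqrt_pos.2 ht
  set f : EuclideanSpace ℝ (Fin n) → ℝ → ℝ≥0∞ := fun ξ s =>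
    Set.indicator {p : (EuclideanSpace ℝ (Fin n)) × ℝ | ‖x - p.1‖ < Real.sqrt t * p.2}
      (fun p => ENNReal.ofReal (p.2 / 2 * Real.exp (-p.2 ^ 2 / 4))) (ξ, s) with hf
  have hmeasA : MeasurableSet {p : (EuclideanSpace ℝ (Fin n)) × ℝ | ‖x - p.1‖ < Real.sqrt t * p.2} := by
    apply measurableSet_lt
    · exact (continuous_const.sub continuous_fst).norm.measurable
    · exact (continuous_const.mul continuous_snd).measurable
  have hmeasf : Measurable (Function.uncurry f) := by
    apply Measurable.indicator _ hmeasA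
    apply ENNReal.measurable_ofReal.comp
    exact ((continuous_snd.div_const 2).mul
      (((continuous_snd.pow 2).neg.div_const 4).rexp)).measurable
  -- step A : inner integral in s
  have hA : ∀ ξ, ∫⁻ s in Set.Ioi (0:ℝ), f ξ s
      = ENNReal.ofReal (Real.exp (-‖x - ξ‖ ^ 2 / (4 * t))) := by
    intro ξ
    set b := ‖x - ξ‖ / Real.sqrt t with hb
    have hb0 : 0 ≤ b := div_nonneg (norm_nonneg _) hst.le
    have hset : ∀ s : ℝ, (‖x - ξ‖ < Real.sqrt t * s) ↔ s ∈ Set.Ioi b := by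
      intro s
      rw [Set.mem_Ioi, hb, div_lt_iff₀ hst, mul_comm]
    have : ∀ s, f ξ s = Set.indicator (Set.Ioi b)
        (fun s => ENNReal.ofReal (s / 2 * Real.exp (-s ^ 2 / 4))) s := by
      intro s
      simp only [hf, Set.indicator, Set.mem_setOf_eq, hset s]
    simp only [this]
    rw [lintegral_indicator measurableSet_Ioi, Measure.restrict_restrict measurableSet_Ioi]
    have hinter : Set.Ioi b ∩ Set.Ioi (0:ℝ) = Set.Ioi b := by
      rw [Set.Ioi_inter_Ioi, max_eq_left hb0]
    rw [hinter]
    rw [← ofReal_integral_eq_lintegral_ofReal, aux_ftc b]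
    · congr 1
      rw [hb, div_pow, Real.sq_sqrt ht.le]
      rw [neg_div, neg_div, div_div]
      ring_nf
    · have h1 : Integrable (fun s : ℝ => s * Real.exp (-(1/4) * s ^ 2)) :=
        integrable_mul_exp_neg_mul_sq (by norm_num)
      refine ((h1.div_const 2).integrableOn (s := Set.Ioi b)).congr_fun (fun y _ => ?_)
        measurableSet_Ioi
      ring_nf
    · filter_upwards [ae_restrict_mem measurableSet_Ioi] with s hs
      have : (0:ℝ) ≤ s := le_trans hb0 (le_of_lt hs)
      positivity
  -- step C : inner integral in ξ for fixed s > 0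
  have hC : ∀ s : ℝ, ∫⁻ ξ, f ξ s ∂ν
      = ENNReal.ofReal (s / 2 * Real.exp (-s ^ 2 / 4)) * ν (Metric.ball x (Real.sqrt t * s)) := by
    intro s
    have hset : ∀ ξ : EuclideanSpace ℝ (Fin n),
        (‖x - ξ‖ < Real.sqrt t * s) ↔ ξ ∈ Metric.ball x (Real.sqrt t * s) := by
      intro ξ
      rw [Metric.mem_ball, dist_eq_norm, norm_sub_rev]
    have : ∀ ξ, f ξ s = Set.indicator (Metric.ball x (Real.sqrt t * s))
        (fun _ => ENNReal.ofReal (s / 2 * Real.exp (-s ^ 2 / 4))) ξ := by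
      intro ξ
      simp only [hf, Set.indicator, Set.mem_setOf_eq]
      have := hset ξ
      split_ifs with h1 h2 h2
      · rfl
      · exact absurd (this.1 h1) h2
      · exact absurd (this.2 h2) h1
      · rfl
    simp only [this]
    rw [lintegral_indicator Metric.isOpen_ball.measurableSet, setLIntegral_const]
  calc ∫⁻ ξ, ENNReal.ofReal (Real.exp (-‖x - ξ‖ ^ 2 / (4 * t))) ∂ν
      = ∫⁻ ξ, (∫⁻ s in Set.Ioi (0:ℝ), f ξ s) ∂ν := lintegral_congr fun ξ => (hA ξ).symm
    _ = ∫⁻ s in Set.Ioi (0:ℝ), ∫⁻ ξ, f ξ s ∂ν := by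
        exact lintegral_lintegral_swap hmeasf.aemeasurable
    _ = _ := lintegral_congr fun s => hC s


lemma aux_meas_ball (ν : Measure (EuclideanSpace ℝ (Fin n))) (x : EuclideanSpace ℝ (Fin n))
    {c : ℝ} (hc : 0 ≤ c) : Measurable fun s : ℝ => ν (Metric.ball x (c * s)) := by
  apply Monotone.measurable
  intro s s' h
  exact measure_mono (Metric.ball_subset_ball (mul_le_mul_of_nonneg_left h hc))


lemma aux_repr (μ : Measure (EuclideanSpace ℝ (Fin n))) [IsFiniteMeasure μ]
    (x : EuclideanSpace ℝ (Fin n)) {t : ℝ} (ht : 0 < t) :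
    ∫ ξ, W n (x - ξ) t ∂μ
      = ∫ s in Set.Ioi (0:ℝ), (4 * Real.pi * t) ^ (-(n : ℝ) / 2) *
          (s / 2 * Real.exp (-s ^ 2 / 4)) * (μ (Metric.ball x (Real.sqrt t * s))).toReal := by
  have hst : (0:ℝ) ≤ Real.sqrt t := Real.sqrt_nonneg t
  have h1 : ∫ ξ, W n (x - ξ) t ∂μ
      = (4 * Real.pi * t) ^ (-(n : ℝ) / 2) * ∫ ξ, Real.exp (-‖x - ξ‖ ^ 2 / (4 * t)) ∂μ := by
    simp only [W]
    exact integral_const_mul _ _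
  have h2 : ∫ ξ, Real.exp (-‖x - ξ‖ ^ 2 / (4 * t)) ∂μ
      = (∫⁻ ξ, ENNReal.ofReal (Real.exp (-‖x - ξ‖ ^ 2 / (4 * t))) ∂μ).toReal := by
    rw [integral_eq_lintegral_of_nonneg_ae]
    · exact Filter.Eventually.of_forall fun ξ => (Real.exp_pos _).le
    · apply Continuous.aestronglyMeasurable
      continuity
  have hmb := aux_meas_ball μ x hst
  have h3 : (∫⁻ s in Set.Ioi (0:ℝ), ENNReal.ofReal (s / 2 * Real.exp (-s ^ 2 / 4))
          * μ (Metric.ball x (Real.sqrt t * s))).toReal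
      = ∫ s in Set.Ioi (0:ℝ), (ENNReal.ofReal (s / 2 * Real.exp (-s ^ 2 / 4))
          * μ (Metric.ball x (Real.sqrt t * s))).toReal := by
    rw [integral_toReal]
    · exact (ENNReal.measurable_ofReal.comp (by fun_prop)).mul hmb |>.aemeasurable
    · refine Filter.Eventually.of_forall fun s => ?_
      exact ENNReal.mul_lt_top ENNReal.ofReal_lt_top (measure_lt_top μ _)
  rw [h1, h2, aux_tonelli μ x ht, h3, ← integral_const_mul]
  refine setIntegral_congr_fun measurableSet_Ioi fun s hs => ?_
  rw [ENNReal.toReal_mul, ENNReal.toReal_ofReal (by have hs2 : (0:ℝ) < s := hs; positivity)]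
  ring


lemma aux_gauss_lint :
    ∫⁻ ξ : EuclideanSpace ℝ (Fin n), ENNReal.ofReal (Real.exp (-‖(0 : EuclideanSpace ℝ (Fin n)) - ξ‖ ^ 2 / (4 * 1)))
      = ENNReal.ofReal ((4 * Real.pi) ^ ((n:ℝ) / 2)) := by
  have hb : (0:ℝ) < 1/4 := by norm_num
  have g_int : Integrable (fun v : EuclideanSpace ℝ (Fin n) => Real.exp (-(1/4) * ‖v‖ ^ 2)) := by
    have hi := GaussianFourier.integrable_cexp_neg_mul_sq_norm_add
      (V := EuclideanSpace ℝ (Fin n)) (b := (1/4 : ℂ)) (by norm_num) 0 0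
    have := hi.norm
    refine this.congr (Filter.Eventually.of_forall fun v => ?_)
    simp only [Complex.norm_exp]
    congr 1
    simp only [zero_mul, add_zero]
    rw [show (-(1/4 : ℂ) * (‖v‖:ℂ) ^ 2) = ((-(1/4) * ‖v‖^2 : ℝ) : ℂ) by push_cast; ring,
      Complex.ofReal_re]
  have hval : ∫ v : EuclideanSpace ℝ (Fin n), Real.exp (-(1/4) * ‖v‖ ^ 2)
      = (4 * Real.pi) ^ ((n:ℝ) / 2) := by
    rw [GaussianFourier.integral_rexp_neg_mul_sq_norm hb]
    norm_num [finrank_euclideanSpace_fin]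
    ring_nf
  rw [show (fun ξ : EuclideanSpace ℝ (Fin n) =>
        ENNReal.ofReal (Real.exp (-‖(0 : EuclideanSpace ℝ (Fin n)) - ξ‖ ^ 2 / (4 * 1))))
      = fun ξ : EuclideanSpace ℝ (Fin n) => ENNReal.ofReal (Real.exp (-(1/4) * ‖ξ‖ ^ 2)) by
    funext ξ; congr 1; rw [zero_sub, norm_neg]; ring_nf]
  rw [← ofReal_integral_eq_lintegral_ofReal g_int
    (Filter.Eventually.of_forall fun v => (Real.exp_pos _).le), hval]


lemma aux_wsum :
    ∫ s in Set.Ioi (0:ℝ), (s / 2 * Real.exp (-s ^ 2 / 4)) *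
        (s ^ n * (volume (Metric.ball (0 : EuclideanSpace ℝ (Fin n)) 1)).toReal)
      = (4 * Real.pi) ^ ((n:ℝ) / 2) := by
  have key := aux_tonelli (volume : Measure (EuclideanSpace ℝ (Fin n))) 0 one_pos
  rw [aux_gauss_lint, Real.sqrt_one] at key
  simp only [one_mul] at key
  have hb1 : volume (Metric.ball (0 : EuclideanSpace ℝ (Fin n)) 1) ≠ ⊤ :=
    measure_ball_lt_top.ne
  have hcong : ∫⁻ s in Set.Ioi (0:ℝ), ENNReal.ofReal (s / 2 * Real.exp (-s ^ 2 / 4))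
        * volume (Metric.ball (0 : EuclideanSpace ℝ (Fin n)) s)
      = ∫⁻ s in Set.Ioi (0:ℝ), ENNReal.ofReal (s / 2 * Real.exp (-s ^ 2 / 4))
        * (ENNReal.ofReal (s ^ n) * volume (Metric.ball (0 : EuclideanSpace ℝ (Fin n)) 1)) := by
    apply lintegral_congr_ae
    filter_upwards [ae_restrict_mem measurableSet_Ioi] with s hs
    rw [Measure.addHaar_ball_of_pos volume _ hs, finrank_euclideanSpace_fin]
  rw [hcong] at key
  have hint : ∫ s in Set.Ioi (0:ℝ), (ENNReal.ofReal (s / 2 * Real.exp (-s ^ 2 / 4))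
        * (ENNReal.ofReal (s ^ n) * volume (Metric.ball (0 : EuclideanSpace ℝ (Fin n)) 1))).toReal
      = (∫⁻ s in Set.Ioi (0:ℝ), ENNReal.ofReal (s / 2 * Real.exp (-s ^ 2 / 4))
        * (ENNReal.ofReal (s ^ n) * volume (Metric.ball (0 : EuclideanSpace ℝ (Fin n)) 1))).toReal := by
    apply integral_toReal
    · exact ((ENNReal.measurable_ofReal.comp (by fun_prop)).mul
        ((ENNReal.measurable_ofReal.comp (by fun_prop)).mul measurable_const)).aemeasurable
    · refine Filter.Eventually.of_forall fun s => ?_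
      exact ENNReal.mul_lt_top ENNReal.ofReal_lt_top
        (ENNReal.mul_lt_top ENNReal.ofReal_lt_top hb1.lt_top)
  rw [← key, ENNReal.toReal_ofReal (by positivity)] at hint
  rw [← hint]
  refine setIntegral_congr_fun measurableSet_Ioi fun s hs => ?_
  have hs2 : (0:ℝ) < s := hs
  rw [ENNReal.toReal_mul, ENNReal.toReal_mul, ENNReal.toReal_ofReal (by positivity),
    ENNReal.toReal_ofReal (by positivity)]


lemma aux_hder' (μ : Measure (EuclideanSpace ℝ (Fin n))) (x₀ : EuclideanSpace ℝ (Fin n)) (L : ℝ)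
    (hder : ∀ (y : EuclideanSpace ℝ (Fin n)) (s : ℝ), 0 < s →
      Tendsto (fun r : ℝ =>
          (μ ((fun z => x₀ + r • z) '' Metric.ball y s)).toReal
            / (volume ((r : ℝ) • Metric.ball y s)).toReal)
        (nhdsWithin 0 (Set.Ioi 0)) (nhds L))
    (y : EuclideanSpace ℝ (Fin n)) {s ε : ℝ} (hs : 0 < s) (hε : 0 < ε) :
    ∀ᶠ r in nhdsWithin (0:ℝ) (Set.Ioi 0),
      (μ (Metric.ball (x₀ + r • y) (r * s))).toReal
          ≤ (L + ε) * (r ^ n * ((volume (Metric.ball (0 : EuclideanSpace ℝ (Fin n)) 1)).toReal * s ^ n))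
      ∧ (L - ε) * (r ^ n * ((volume (Metric.ball (0 : EuclideanSpace ℝ (Fin n)) 1)).toReal * s ^ n))
          ≤ (μ (Metric.ball (x₀ + r • y) (r * s))).toReal := by
  have hc : 0 < (volume (Metric.ball (0 : EuclideanSpace ℝ (Fin n)) 1)).toReal := by
    refine ENNReal.toReal_pos (measure_ball_pos _ _ one_pos).ne' measure_ball_lt_top.ne
  have h := hder y s hs
  rw [Metric.tendsto_nhds] at h
  filter_upwards [h ε hε, self_mem_nhdsWithin] with r hr hrpos
  have hr0 : (0:ℝ) < r := hrpos
  have himg : (fun z => x₀ + r • z) '' Metric.ball y s = Metric.ball (x₀ + r • y) (r * s) :=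
    aux_image_ball x₀ y hr0
  have hvol : (volume ((r : ℝ) • Metric.ball y s)).toReal
      = r ^ n * ((volume (Metric.ball (0 : EuclideanSpace ℝ (Fin n)) 1)).toReal * s ^ n) := by
    rw [Measure.addHaar_smul_of_nonneg volume hr0.le, finrank_euclideanSpace_fin,
      Measure.addHaar_ball_center, Measure.addHaar_ball_of_pos volume _ hs,
      finrank_euclideanSpace_fin, ENNReal.toReal_mul, ENNReal.toReal_mul,
      ENNReal.toReal_ofReal (by positivity), ENNReal.toReal_ofReal (by positivity)]
    ring
  rw [himg, hvol, Real.dist_eq, abs_sub_lt_iff] at hr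
  set B := r ^ n * ((volume (Metric.ball (0 : EuclideanSpace ℝ (Fin n)) 1)).toReal * s ^ n) with hB
  have hBpos : 0 < B := by positivity
  obtain ⟨h1, h2⟩ := hr
  constructor
  · have : (μ (Metric.ball (x₀ + r • y) (r * s))).toReal / B < L + ε := by linarith
    calc (μ (Metric.ball (x₀ + r • y) (r * s))).toReal
        = ((μ (Metric.ball (x₀ + r • y) (r * s))).toReal / B) * B := by field_simp
      _ ≤ (L + ε) * B := mul_le_mul_of_nonneg_right this.le hBpos.le
  · have : L - ε < (μ (Metric.ball (x₀ + r • y) (r * s))).toReal / B := by linarith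
    calc (L - ε) * B ≤ ((μ (Metric.ball (x₀ + r • y) (r * s))).toReal / B) * B :=
          mul_le_mul_of_nonneg_right this.le hBpos.le
      _ = (μ (Metric.ball (x₀ + r • y) (r * s))).toReal := by field_simp


lemma aux_ball_subset (x₀ y i : EuclideanSpace ℝ (Fin n)) {r η s : ℝ} (hr : 0 < r)
    (h : dist y i < η) :
    Metric.ball (x₀ + r • y) (r * s) ⊆ Metric.ball (x₀ + r • i) (r * (s + η)) := by
  intro u hu
  rw [Metric.mem_ball] at hu ⊢
  have hsub : (x₀ + r • y) - (x₀ + r • i) = r • (y - i) := by rw [smul_sub]; abel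
  have hd : dist (x₀ + r • y) (x₀ + r • i) = r * dist y i := by
    rw [dist_eq_norm, hsub, norm_smul, Real.norm_eq_abs, abs_of_pos hr, ← dist_eq_norm]
  calc dist u (x₀ + r • i) ≤ dist u (x₀ + r • y) + dist (x₀ + r • y) (x₀ + r • i) :=
        dist_triangle _ _ _
    _ < r * s + r * η := by rw [hd]; exact add_lt_add hu ((mul_lt_mul_iff_right₀ hr).2 h)
    _ = r * (s + η) := by ring


lemma aux_U (μ : Measure (EuclideanSpace ℝ (Fin n))) [IsFiniteMeasure μ]
    (x₀ : EuclideanSpace ℝ (Fin n)) (L : ℝ)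
    (hder : ∀ (y : EuclideanSpace ℝ (Fin n)) (s : ℝ), 0 < s →
      Tendsto (fun r : ℝ =>
          (μ ((fun z => x₀ + r • z) '' Metric.ball y s)).toReal
            / (volume ((r : ℝ) • Metric.ball y s)).toReal)
        (nhdsWithin 0 (Set.Ioi 0)) (nhds L))
    {α s ε : ℝ} (hα : 0 < α) (hs : 0 < s) (hε : 0 < ε) :
    ∀ᶠ r in nhdsWithin (0:ℝ) (Set.Ioi 0), ∀ y : EuclideanSpace ℝ (Fin n), ‖y‖ ≤ Real.sqrt α →
      |(μ (Metric.ball (x₀ + r • y) (r * s))).toReal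
          - L * (r ^ n * ((volume (Metric.ball (0 : EuclideanSpace ℝ (Fin n)) 1)).toReal * s ^ n))|
        ≤ ε * (r ^ n * ((volume (Metric.ball (0 : EuclideanSpace ℝ (Fin n)) 1)).toReal * s ^ n)) := by
  set c := (volume (Metric.ball (0 : EuclideanSpace ℝ (Fin n)) 1)).toReal with hcdef
  have hc : 0 < c :=
    ENNReal.toReal_pos (measure_ball_pos _ _ one_pos).ne' measure_ball_lt_top.ne
  -- choose η
  have hev1 : ∀ᶠ η in nhds (0:ℝ), (L + ε/2) * (s+η)^n < (L+ε) * s^n := by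
    have hcont : ContinuousAt (fun η : ℝ => (L + ε/2) * (s+η)^n) 0 := by fun_prop
    have hval : (L + ε/2) * (s+0)^n < (L+ε) * s^n := by
      rw [add_zero]
      have : (0:ℝ) < s^n := by positivity
      nlinarith
    exact hcont.eventually_lt continuousAt_const hval
  have hev2 : ∀ᶠ η in nhds (0:ℝ), (L-ε) * s^n < (L - ε/2) * (s-η)^n := by
    have hcont : ContinuousAt (fun η : ℝ => (L - ε/2) * (s-η)^n) 0 := by fun_prop
    have hval : (L-ε) * s^n < (L - ε/2) * (s-0)^n := by
      rw [sub_zero]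
      have : (0:ℝ) < s^n := by positivity
      nlinarith
    exact continuousAt_const.eventually_lt hcont hval
  have hev3 : ∀ᶠ η in nhds (0:ℝ), η < s := gt_mem_nhds hs
  obtain ⟨η, ⟨⟨hη1, hη2⟩, hηs⟩, hηpos⟩ :=
    ((((hev1.and hev2).and hev3).filter_mono nhdsWithin_le_nhds).and
      self_mem_nhdsWithin).exists (f := nhdsWithin (0:ℝ) (Set.Ioi 0))
  have hηpos' : (0:ℝ) < η := hηpos
  -- finite subcover
  obtain ⟨F, hF⟩ := (isCompact_closedBall (0 : EuclideanSpace ℝ (Fin n))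
      (Real.sqrt α)).elim_finite_subcover (fun y => Metric.ball y η)
    (fun _ => Metric.isOpen_ball) (fun y _ => Set.mem_iUnion.2 ⟨y, Metric.mem_ball_self hηpos'⟩)
  have hev : ∀ᶠ r in nhdsWithin (0:ℝ) (Set.Ioi 0), ∀ i ∈ F,
      ((μ (Metric.ball (x₀ + r • i) (r * (s+η)))).toReal
          ≤ (L + ε/2) * (r ^ n * (c * (s+η) ^ n))
        ∧ (L - ε/2) * (r ^ n * (c * (s+η) ^ n))
          ≤ (μ (Metric.ball (x₀ + r • i) (r * (s+η)))).toReal)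
      ∧ ((μ (Metric.ball (x₀ + r • i) (r * (s-η)))).toReal
          ≤ (L + ε/2) * (r ^ n * (c * (s-η) ^ n))
        ∧ (L - ε/2) * (r ^ n * (c * (s-η) ^ n))
          ≤ (μ (Metric.ball (x₀ + r • i) (r * (s-η)))).toReal) := by
    refine (Filter.eventually_all_finite F.finite_toSet).2 fun i _ => ?_
    exact (aux_hder' μ x₀ L hder i (by linarith) (half_pos hε)).and
      (aux_hder' μ x₀ L hder i (by linarith) (half_pos hε))
  filter_upwards [hev, self_mem_nhdsWithin] with r h hrpos
  intro y hy
  have hr0 : (0:ℝ) < r := hrpos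
  have hy' : y ∈ Metric.closedBall (0 : EuclideanSpace ℝ (Fin n)) (Real.sqrt α) := by
    rwa [Metric.mem_closedBall, dist_zero_right]
  obtain ⟨i, hiF, hyi⟩ := Set.mem_iUnion₂.1 (hF hy')
  rw [Metric.mem_ball] at hyi
  obtain ⟨⟨hu1, _⟩, ⟨_, hl2⟩⟩ := h i hiF
  have hsub1 : Metric.ball (x₀ + r • y) (r * s) ⊆ Metric.ball (x₀ + r • i) (r * (s + η)) :=
    aux_ball_subset x₀ y i hr0 hyi
  have hsub2 : Metric.ball (x₀ + r • i) (r * (s - η)) ⊆ Metric.ball (x₀ + r • y) (r * s) := by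
    have := aux_ball_subset x₀ i y (s := s - η) hr0 (by rwa [dist_comm])
    rwa [sub_add_cancel] at this
  have hmono1 : (μ (Metric.ball (x₀ + r • y) (r * s))).toReal
      ≤ (μ (Metric.ball (x₀ + r • i) (r * (s + η)))).toReal :=
    ENNReal.toReal_mono (measure_ne_top μ _) (measure_mono hsub1)
  have hmono2 : (μ (Metric.ball (x₀ + r • i) (r * (s - η)))).toReal
      ≤ (μ (Metric.ball (x₀ + r • y) (r * s))).toReal :=
    ENNReal.toReal_mono (measure_ne_top μ _) (measure_mono hsub2)
  have hrc : (0:ℝ) < r ^ n * c := by positivity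
  rw [abs_sub_le_iff]
  constructor
  · have : (L + ε/2) * (r ^ n * (c * (s+η) ^ n)) ≤ (L + ε) * (r ^ n * (c * s ^ n)) := by
      have := mul_le_mul_of_nonneg_left hη1.le hrc.le
      calc (L + ε/2) * (r ^ n * (c * (s+η) ^ n)) = (r^n*c) * ((L + ε/2) * (s+η)^n) := by ring
        _ ≤ (r^n*c) * ((L+ε) * s^n) := this
        _ = (L + ε) * (r ^ n * (c * s ^ n)) := by ring
    nlinarith [hmono1.trans (hu1.trans this)]
  · have : (L - ε) * (r ^ n * (c * s ^ n)) ≤ (L - ε/2) * (r ^ n * (c * (s-η) ^ n)) := by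
      have := mul_le_mul_of_nonneg_left hη2.le hrc.le
      calc (L - ε) * (r ^ n * (c * s ^ n)) = (r^n*c) * ((L-ε) * s^n) := by ring
        _ ≤ (r^n*c) * ((L - ε/2) * (s-η)^n) := this
        _ = (L - ε/2) * (r ^ n * (c * (s-η) ^ n)) := by ring
    nlinarith [this.trans (hl2.trans hmono2)]


lemma aux_cancel {X y bn q : ℝ} (h : bn ≠ 0) : X / bn * (q * (bn * y)) = q * (X * y) := by
  field_simp


lemma aux_half {e w : ℝ} (hw : w ≠ 0) : e / (2 * w) * w = e / 2 := by
  field_simp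


lemma aux_arith {A e2 m bn P C : ℝ} (hA : 0 ≤ A) (he2 : 0 ≤ e2) (hbn : 0 < bn)
    (hm : m ≤ C * (bn * P)) : A / bn * e2 * m ≤ A * e2 * (C * P) := by
  have h1 : A / bn * e2 * m ≤ A / bn * e2 * (C * (bn * P)) :=
    mul_le_mul_of_nonneg_left hm (by positivity)
  refine h1.trans (le_of_eq ?_)
  field_simp

set_option maxHeartbeats 1000000 in
theorem stmt17 {n : ℕ} (μ : Measure (EuclideanSpace ℝ (Fin n))) [IsFiniteMeasure μ]
    (x₀ : EuclideanSpace ℝ (Fin n)) (L : ℝ) (hL : 0 ≤ L)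
    (hder : ∀ (y : EuclideanSpace ℝ (Fin n)) (s : ℝ), 0 < s →
      Tendsto (fun r : ℝ =>
          (μ ((fun z => x₀ + r • z) '' Metric.ball y s)).toReal
            / (volume ((r : ℝ) • Metric.ball y s)).toReal)
        (nhdsWithin 0 (Set.Ioi 0)) (nhds L)) :
    ∀ α : ℝ, 0 < α →
      Tendsto (fun p : EuclideanSpace ℝ (Fin n) × ℝ => ∫ ξ, W n (p.1 - ξ) p.2 ∂μ)
        (nhdsWithin (x₀, 0) {p | ‖p.1 - x₀‖ ^ 2 < α * p.2}) (nhds L) := by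
  intro α hα
  set c := (volume (Metric.ball (0 : EuclideanSpace ℝ (Fin n)) 1)).toReal with hcdef
  have hc : 0 < c :=
    ENNReal.toReal_pos (measure_ball_pos _ _ one_pos).ne' measure_ball_lt_top.ne
  set l := nhdsWithin ((x₀, (0:ℝ)) : EuclideanSpace ℝ (Fin n) × ℝ)
    {p : EuclideanSpace ℝ (Fin n) × ℝ | ‖p.1 - x₀‖ ^ 2 < α * p.2} with hl
  have hmemS : ∀ᶠ p in l, ‖p.1 - x₀‖ ^ 2 < α * p.2 := self_mem_nhdsWithin
  have htpos : ∀ᶠ p in l, 0 < p.2 :=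
    hmemS.mono fun p hp => by nlinarith [sq_nonneg ‖p.1 - x₀‖]
  have ht0 : Tendsto (fun p : EuclideanSpace ℝ (Fin n) × ℝ => p.2) l (nhds 0) :=
    (continuous_snd.tendsto _).mono_left nhdsWithin_le_nhds
  have hsqrt : Tendsto (fun p : EuclideanSpace ℝ (Fin n) × ℝ => Real.sqrt p.2) l
      (nhdsWithin 0 (Set.Ioi 0)) := by
    rw [tendsto_nhdsWithin_iff]
    constructor
    · have h0 : Tendsto Real.sqrt (nhds 0) (nhds 0) := by
        simpa using (Real.continuous_sqrt.tendsto 0)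
      exact h0.comp ht0
    · exact htpos.mono fun p hp => Real.sqrt_pos.2 hp
  -- distance bound on the parabolic region
  have hdist : ∀ p : EuclideanSpace ℝ (Fin n) × ℝ, ‖p.1 - x₀‖ ^ 2 < α * p.2 →
      ‖p.1 - x₀‖ ≤ Real.sqrt α * Real.sqrt p.2 := by
    intro p hp
    rw [← Real.sqrt_mul hα.le]
    exact (Real.lt_sqrt (norm_nonneg _)).2 hp |>.le
  -- growth bound
  obtain ⟨ρ₀, hρ₀pos, hgrow⟩ : ∃ ρ₀, 0 < ρ₀ ∧ ∀ ρ, 0 < ρ → ρ < ρ₀ →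
      (μ (Metric.ball x₀ ρ)).toReal ≤ (L + 1) * (ρ ^ n * c) := by
    have h2 := aux_hder' μ x₀ L hder 0 one_pos one_pos
    rw [Filter.eventually_iff, mem_nhdsGT_iff_exists_Ioo_subset] at h2
    obtain ⟨u, hu, hsub⟩ := h2
    refine ⟨u, hu, fun ρ hρ hρu => ?_⟩
    have := (hsub ⟨hρ, hρu⟩).1
    simpa using this
  set M := (μ (Set.univ : Set (EuclideanSpace ℝ (Fin n)))).toReal with hM
  have hM0 : 0 ≤ M := ENNReal.toReal_nonneg
  set C := (L + 1) * c + M / ρ₀ ^ n with hC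
  have hC0 : 0 ≤ C := by positivity
  set bound : ℝ → ℝ := fun s =>
    (4 * Real.pi) ^ (-(n:ℝ) / 2) * (|s| / 2 * Real.exp (-s ^ 2 / 4)) *
      (C * (|s| + Real.sqrt α) ^ n) with hbound_def
  set G : ℝ → ℝ := fun s =>
    L * ((4 * Real.pi) ^ (-(n:ℝ) / 2) * (s / 2 * Real.exp (-s ^ 2 / 4)) * (c * s ^ n)) with hGdef
  set F : EuclideanSpace ℝ (Fin n) × ℝ → ℝ → ℝ := fun p s =>
    (4 * Real.pi * p.2) ^ (-(n:ℝ) / 2) * (s / 2 * Real.exp (-s ^ 2 / 4)) *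
      (μ (Metric.ball p.1 (Real.sqrt p.2 * s))).toReal with hFdef
  -- rpow facts
  have h4π : (0:ℝ) < 4 * Real.pi := by positivity
  have hbn : ∀ t : ℝ, 0 < t → (Real.sqrt t) ^ n = t ^ ((n:ℝ) / 2) := by
    intro t ht
    rw [← Real.rpow_natCast (Real.sqrt t) n, Real.sqrt_eq_rpow, ← Real.rpow_mul ht.le,
      show (1/(2:ℝ)) * (n:ℝ) = (n:ℝ)/2 by ring]
  have hA : ∀ t : ℝ, 0 < t →
      (4 * Real.pi * t) ^ (-(n:ℝ) / 2) = (4 * Real.pi) ^ (-(n:ℝ) / 2) / (Real.sqrt t) ^ n := by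
    intro t ht
    rw [Real.mul_rpow h4π.le ht.le, hbn t ht, div_eq_mul_inv]
    congr 1
    rw [← Real.rpow_neg ht.le]
    congr 1
    ring
  haveI hlcg : l.IsCountablyGenerated := by rw [hl]; infer_instance
  -- pointwise bound
  have h_boundp : ∀ p : EuclideanSpace ℝ (Fin n) × ℝ, 0 < p.2 → ‖p.1 - x₀‖ ^ 2 < α * p.2 →
      ∀ s : ℝ, 0 < s → F p s ≤ bound s := by
    intro p ht hp s hs
    have hbpos : 0 < Real.sqrt p.2 := Real.sqrt_pos.2 ht
    have hbn0 : (0:ℝ) < Real.sqrt p.2 ^ n := by positivity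
    simp only [hFdef, hbound_def]
    rw [hA p.2 ht, abs_of_pos hs]
    refine aux_arith (Real.rpow_nonneg h4π.le _) (by positivity) hbn0 ?_
    -- show : μ (ball p.1 (√p.2 * s)) ≤ C * (√p.2 ^ n * (s + √α) ^ n)
    have hPn : (0:ℝ) ≤ (s + Real.sqrt α) ^ n := by positivity
    rcases lt_or_ge (Real.sqrt p.2 * (s + Real.sqrt α)) ρ₀ with hcase | hcase
    · have hsub : Metric.ball p.1 (Real.sqrt p.2 * s)
          ⊆ Metric.ball x₀ (Real.sqrt p.2 * (s + Real.sqrt α)) := by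
        intro u hu
        rw [Metric.mem_ball] at hu ⊢
        have hd : dist p.1 x₀ ≤ Real.sqrt α * Real.sqrt p.2 := by
          rw [dist_eq_norm]; exact hdist p hp
        calc dist u x₀ ≤ dist u p.1 + dist p.1 x₀ := dist_triangle _ _ _
          _ < Real.sqrt p.2 * s + Real.sqrt α * Real.sqrt p.2 := add_lt_add_of_lt_of_le hu hd
          _ = Real.sqrt p.2 * (s + Real.sqrt α) := by ring
      have hm : (μ (Metric.ball p.1 (Real.sqrt p.2 * s))).toReal
          ≤ (L + 1) * ((Real.sqrt p.2 * (s + Real.sqrt α)) ^ n * c) := by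
        refine le_trans (ENNReal.toReal_mono (measure_ne_top μ _) (measure_mono hsub)) ?_
        exact hgrow _ (by positivity) hcase
      rw [mul_pow] at hm
      refine hm.trans ?_
      have hCge : (L + 1) * c ≤ C := by
        rw [hC]
        nlinarith [div_nonneg hM0 (pow_pos hρ₀pos n).le]
      calc (L + 1) * (Real.sqrt p.2 ^ n * (s + Real.sqrt α) ^ n * c)
          = ((L + 1) * c) * (Real.sqrt p.2 ^ n * (s + Real.sqrt α) ^ n) := by ring
        _ ≤ C * (Real.sqrt p.2 ^ n * (s + Real.sqrt α) ^ n) :=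
            mul_le_mul_of_nonneg_right hCge (by positivity)
    · have hm : (μ (Metric.ball p.1 (Real.sqrt p.2 * s))).toReal ≤ M :=
        ENNReal.toReal_mono (measure_ne_top μ _) (measure_mono (Set.subset_univ _))
      have hpow : ρ₀ ^ n ≤ Real.sqrt p.2 ^ n * (s + Real.sqrt α) ^ n := by
        rw [← mul_pow]
        exact pow_le_pow_left₀ hρ₀pos.le hcase n
      have hMC : M / ρ₀ ^ n ≤ C := by
        rw [hC]
        nlinarith [mul_nonneg (add_nonneg hL zero_le_one) hc.le]
      refine hm.trans ?_
      have h1 : M = (M / ρ₀ ^ n) * ρ₀ ^ n := by field_simp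
      rw [h1]
      calc (M / ρ₀ ^ n) * ρ₀ ^ n
          ≤ (M / ρ₀ ^ n) * (Real.sqrt p.2 ^ n * (s + Real.sqrt α) ^ n) :=
            mul_le_mul_of_nonneg_left hpow (by positivity)
        _ ≤ C * (Real.sqrt p.2 ^ n * (s + Real.sqrt α) ^ n) :=
            mul_le_mul_of_nonneg_right hMC (by positivity)
  -- measurability
  have hF_meas : ∀ᶠ p in l, AEStronglyMeasurable (F p) (volume.restrict (Set.Ioi (0:ℝ))) := by
    refine Filter.Eventually.of_forall fun p => ?_
    apply Measurable.aestronglyMeasurable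
    refine Measurable.mul ?_ (aux_meas_ball μ p.1 (Real.sqrt_nonneg p.2)).ennreal_toReal
    exact measurable_const.mul (by fun_prop)
  -- bound along the filter
  have h_bound : ∀ᶠ p in l, ∀ᵐ s ∂(volume.restrict (Set.Ioi (0:ℝ))), ‖F p s‖ ≤ bound s := by
    filter_upwards [htpos, hmemS] with p ht hp
    filter_upwards [ae_restrict_mem measurableSet_Ioi] with s hs
    have hs0 : (0:ℝ) < s := hs
    have hFnn : 0 ≤ F p s := by
      rw [hFdef]
      have h1 : (0:ℝ) ≤ (4 * Real.pi * p.2) ^ (-(n:ℝ) / 2) :=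
        Real.rpow_nonneg (by positivity) _
      have h2 : (0:ℝ) ≤ s / 2 * Real.exp (-s ^ 2 / 4) := by positivity
      exact mul_nonneg (mul_nonneg h1 h2) ENNReal.toReal_nonneg
    rw [Real.norm_eq_abs, abs_of_nonneg hFnn]
    exact h_boundp p ht hp s hs0
  -- integrability of the bound
  have bound_int : Integrable bound (volume.restrict (Set.Ioi (0:ℝ))) := by
    have hb14 : (0:ℝ) < 1/4 := by norm_num
    have h1 : IntegrableOn (fun x : ℝ => x ^ (n+1) * Real.exp (-(1/4) * x ^ 2))
        (Set.Ioi (0:ℝ)) := by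
      have := integrableOn_rpow_mul_exp_neg_mul_sq hb14 (s := ((n:ℝ) + 1))
        (by have : (0:ℝ) ≤ n := Nat.cast_nonneg n; linarith)
      refine this.congr_fun (fun x _ => ?_) measurableSet_Ioi
      dsimp only
      rw [show ((n:ℝ) + 1) = ((n+1 : ℕ) : ℝ) by push_cast; ring, Real.rpow_natCast]
    have h2 : IntegrableOn (fun x : ℝ => x * Real.exp (-(1/4) * x ^ 2)) (Set.Ioi (0:ℝ)) :=
      (integrable_mul_exp_neg_mul_sq hb14).integrableOn
    set c0 := (4 * Real.pi) ^ (-(n:ℝ) / 2) with hc0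
    have hc00 : 0 ≤ c0 := Real.rpow_nonneg h4π.le _
    set K2 := c0 * C * 2 ^ n / 2 with hK2
    set K3 := c0 * C * 2 ^ n * (Real.sqrt α) ^ n / 2 with hK3
    have hg : Integrable (fun s : ℝ =>
        K2 * (s ^ (n+1) * Real.exp (-(1/4) * s ^ 2)) + K3 * (s * Real.exp (-(1/4) * s ^ 2)))
        (volume.restrict (Set.Ioi (0:ℝ))) := (h1.const_mul K2).add (h2.const_mul K3)
    refine hg.mono' ?_ ?_
    · apply Measurable.aestronglyMeasurable
      rw [hbound_def]
      fun_prop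
    · filter_upwards [ae_restrict_mem measurableSet_Ioi] with s hs
      have hs0 : (0:ℝ) < s := hs
      have hbnn : 0 ≤ bound s := by
        rw [hbound_def]
        positivity
      rw [Real.norm_eq_abs, abs_of_nonneg hbnn, hbound_def]
      simp only [abs_of_pos hs0]
      have hsum : (s + Real.sqrt α) ^ n ≤ 2 ^ n * (s ^ n + (Real.sqrt α) ^ n) := by
        have hmax : s + Real.sqrt α ≤ 2 * max s (Real.sqrt α) := by
          rcases le_total s (Real.sqrt α) with h | h
          · rw [max_eq_right h]; linarith
          · rw [max_eq_left h]; linarith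
        calc (s + Real.sqrt α) ^ n ≤ (2 * max s (Real.sqrt α)) ^ n :=
              pow_le_pow_left₀ (by positivity) hmax n
          _ = 2 ^ n * (max s (Real.sqrt α)) ^ n := by rw [mul_pow]
          _ ≤ 2 ^ n * (s ^ n + (Real.sqrt α) ^ n) := by
              refine mul_le_mul_of_nonneg_left ?_ (by positivity)
              rcases le_total s (Real.sqrt α) with h | h
              · rw [max_eq_right h]
                have : (0:ℝ) ≤ s ^ n := by positivity
                linarith
              · rw [max_eq_left h]
                have : (0:ℝ) ≤ (Real.sqrt α) ^ n := by positivity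
                linarith
      have hexp : Real.exp (-s ^ 2 / 4) = Real.exp (-(1/4) * s ^ 2) := by ring_nf
      rw [hexp]
      have hkey : c0 * (s / 2 * Real.exp (-(1/4) * s ^ 2)) * (C * (s + Real.sqrt α) ^ n)
          ≤ c0 * (s / 2 * Real.exp (-(1/4) * s ^ 2)) * (C * (2 ^ n * (s ^ n + (Real.sqrt α) ^ n))) := by
        refine mul_le_mul_of_nonneg_left (mul_le_mul_of_nonneg_left hsum hC0) ?_
        positivity
      refine hkey.trans (le_of_eq ?_)
      rw [hK2, hK3]
      ring
  -- pointwise limit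
  have h_lim : ∀ᵐ s ∂(volume.restrict (Set.Ioi (0:ℝ))),
      Tendsto (fun p => F p s) l (nhds (G s)) := by
    filter_upwards [ae_restrict_mem measurableSet_Ioi] with s hs
    have hs0 : (0:ℝ) < s := hs
    rw [Metric.tendsto_nhds]
    intro ε hε
    set w := (4 * Real.pi) ^ (-(n:ℝ) / 2) * (s / 2 * Real.exp (-s ^ 2 / 4)) * (c * s ^ n) with hw
    have hw0 : 0 < w := by
      have h0 : (0:ℝ) < (4 * Real.pi) ^ (-(n:ℝ) / 2) := Real.rpow_pos_of_pos h4π _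
      positivity
    have hε'' : 0 < ε / (2 * w) := by positivity
    have hU := aux_U μ x₀ L hder hα hs0 hε''
    filter_upwards [hsqrt.eventually hU, htpos, hmemS] with p hUp ht hp
    have hbpos : 0 < Real.sqrt p.2 := Real.sqrt_pos.2 ht
    have hbn0 : (0:ℝ) < Real.sqrt p.2 ^ n := by positivity
    have hxy : x₀ + Real.sqrt p.2 • ((Real.sqrt p.2)⁻¹ • (p.1 - x₀)) = p.1 := by
      rw [smul_smul, mul_inv_cancel₀ hbpos.ne', one_smul]
      abel
    have hyn : ‖(Real.sqrt p.2)⁻¹ • (p.1 - x₀)‖ ≤ Real.sqrt α := by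
      rw [norm_smul, Real.norm_eq_abs, abs_of_pos (inv_pos.2 hbpos)]
      have hd := hdist p hp
      calc (Real.sqrt p.2)⁻¹ * ‖p.1 - x₀‖
          ≤ (Real.sqrt p.2)⁻¹ * (Real.sqrt α * Real.sqrt p.2) :=
            mul_le_mul_of_nonneg_left hd (inv_pos.2 hbpos).le
        _ = Real.sqrt α := by field_simp
    have hUy := hUp ((Real.sqrt p.2)⁻¹ • (p.1 - x₀)) hyn
    rw [hxy] at hUy
    have hKb : (0:ℝ) < (4 * Real.pi) ^ (-(n:ℝ) / 2) * (s / 2 * Real.exp (-s ^ 2 / 4))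
        / Real.sqrt p.2 ^ n := by
      have h0 : (0:ℝ) < (4 * Real.pi) ^ (-(n:ℝ) / 2) := Real.rpow_pos_of_pos h4π _
      positivity
    have hFG : F p s - G s
        = ((4 * Real.pi) ^ (-(n:ℝ) / 2) * (s / 2 * Real.exp (-s ^ 2 / 4)) / Real.sqrt p.2 ^ n)
          * ((μ (Metric.ball p.1 (Real.sqrt p.2 * s))).toReal
              - L * (Real.sqrt p.2 ^ n * (c * s ^ n))) := by
      simp only [hFdef, hGdef]
      rw [hA p.2 ht]
      field_simp
    rw [Real.dist_eq, hFG, abs_mul, abs_of_pos hKb]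
    calc ((4 * Real.pi) ^ (-(n:ℝ) / 2) * (s / 2 * Real.exp (-s ^ 2 / 4)) / Real.sqrt p.2 ^ n)
          * |(μ (Metric.ball p.1 (Real.sqrt p.2 * s))).toReal
              - L * (Real.sqrt p.2 ^ n * (c * s ^ n))|
        ≤ ((4 * Real.pi) ^ (-(n:ℝ) / 2) * (s / 2 * Real.exp (-s ^ 2 / 4)) / Real.sqrt p.2 ^ n)
          * (ε / (2 * w) * (Real.sqrt p.2 ^ n * (c * s ^ n))) :=
          mul_le_mul_of_nonneg_left hUy hKb.le
      _ = ε / (2 * w) * ((4 * Real.pi) ^ (-(n:ℝ) / 2) * (s / 2 * Real.exp (-s ^ 2 / 4))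
            * (c * s ^ n)) := aux_cancel hbn0.ne'
      _ = ε / (2 * w) * w := by rw [hw]
      _ = ε / 2 := aux_half hw0.ne'
      _ < ε := by linarith
  -- integral of the limit
  have hGint : ∫ s in Set.Ioi (0:ℝ), G s = L := by
    have h1 : ∀ s : ℝ, G s = (L * (4 * Real.pi) ^ (-(n:ℝ) / 2)) *
        ((s / 2 * Real.exp (-s ^ 2 / 4)) * (s ^ n * c)) := by
      intro s; rw [hGdef]; ring
    calc ∫ s in Set.Ioi (0:ℝ), G s
        = ∫ s in Set.Ioi (0:ℝ), (L * (4 * Real.pi) ^ (-(n:ℝ) / 2)) *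
            ((s / 2 * Real.exp (-s ^ 2 / 4)) * (s ^ n * c)) := by
          exact integral_congr_ae (Filter.Eventually.of_forall fun s => h1 s)
      _ = (L * (4 * Real.pi) ^ (-(n:ℝ) / 2)) *
            ∫ s in Set.Ioi (0:ℝ), (s / 2 * Real.exp (-s ^ 2 / 4)) * (s ^ n * c) :=
          integral_const_mul _ _
      _ = (L * (4 * Real.pi) ^ (-(n:ℝ) / 2)) * (4 * Real.pi) ^ ((n:ℝ) / 2) := by
          rw [hcdef, aux_wsum]
      _ = L := by
          rw [mul_assoc, ← Real.rpow_add h4π,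
            show (-(n:ℝ)/2 + (n:ℝ)/2) = 0 by ring, Real.rpow_zero, mul_one]
  -- dominated convergence
  have hmain := tendsto_integral_filter_of_dominated_convergence (μ := volume.restrict (Set.Ioi (0:ℝ)))
    (F := F) (f := G) bound hF_meas h_bound bound_int h_lim
  rw [hGint] at hmain
  refine hmain.congr' ?_
  filter_upwards [htpos] with p ht
  exact (aux_repr μ p.1 ht).symm
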